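/- (Hessian–vorticity estimate.) Let 0<L_s≤∞ and let u=(u₁,u₂) be a smooth vector field on ℝ×[0,1], Γ-periodic in x₁, with ∇·u=0 in Ω, u₂=0 at x₂∈{0,1}, ∂₂u₁ = −L_s⁻¹·u₁ at x₂=1 and ∂₂u₁ = L_s⁻¹·u₁ at x₂=0 (for L_s=∞: ∂₂u₁=0 at x₂∈{0,1}). Then ‖∇²u‖_{L²(Ω)} ≤ ‖∇ω‖_{L²(Ω)}, where ω = ∂₁u₂ − ∂₂u₁ and ∇²u is the tensor of all second derivatives of u. -/

import Mathlib

noncomputable section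
open MeasureTheory Filter Set
open scoped ENNReal

namespace RB

/-- A time-dependent scalar field: arguments t, x₁, x₂. -/
abbrev TField := ℝ → ℝ → ℝ → ℝ
/-- A static scalar field: arguments x₁, x₂. -/
abbrev SField := ℝ → ℝ → ℝ

def tsmooth (f : TField) : Prop :=
  ContDiff ℝ (⊤ : ℕ∞) (fun q : ℝ × ℝ × ℝ => f q.1 q.2.1 q.2.2)
def ssmooth (f : SField) : Prop :=
  ContDiff ℝ (⊤ : ℕ∞) (fun q : ℝ × ℝ => f q.1 q.2)
def tperiodic (Γ : ℝ) (f : TField) : Prop := ∀ t x1 x2, f t (x1 + Γ) x2 = f t x1 x2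
def speriodic (Γ : ℝ) (f : SField) : Prop := ∀ x1 x2, f (x1 + Γ) x2 = f x1 x2

/-- time derivative -/
def dt (f : TField) : TField := fun t x1 x2 => deriv (fun s => f s x1 x2) t
/-- partial derivative in x₁ (time-dependent field) -/
def d1 (f : TField) : TField := fun t x1 x2 => deriv (fun y => f t y x2) x1
/-- partial derivative in x₂ (time-dependent field) -/
def d2 (f : TField) : TField := fun t x1 x2 => deriv (fun y => f t x1 y) x2
/-- partial derivative in x₁ (static field) -/
def q1 (f : SField) : SField := fun x1 x2 => deriv (fun y => f y x2) x1
/-- partial derivative in x₂ (static field) -/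
def q2 (f : SField) : SField := fun x1 x2 => deriv (fun y => f x1 y) x2

/-- Integral over Ω = [0,Γ]×[0,1]. -/
def intΩ (Γ : ℝ) (g : SField) : ℝ :=
  ∫ x1 in Ioc (0:ℝ) Γ, ∫ x2 in Ioc (0:ℝ) 1, g x1 x2

/-- Long-time horizontal average ⟨f⟩ of a quantity f(t, x₁). -/
def ltavg (Γ : ℝ) (f : ℝ → ℝ → ℝ) : ℝ :=
  limsup (fun t => (1/t) * ∫ s in Ioc (0:ℝ) t, (1/Γ) * ∫ x1 in Ioc (0:ℝ) Γ, f s x1) atTop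

/-- spatial L² norm of a static scalar field over Ω -/
def sL2 (Γ : ℝ) (f : SField) : ℝ := Real.sqrt (intΩ Γ (fun x1 x2 => f x1 x2 ^ 2))
/-- spatial L^r norm of a static scalar field over Ω -/
def sLr (Γ r : ℝ) (f : SField) : ℝ := (intΩ Γ (fun x1 x2 => |f x1 x2| ^ r)) ^ (1/r)
/-- H¹ norm of a static scalar field over Ω -/
def sH1 (Γ : ℝ) (f : SField) : ℝ :=
  Real.sqrt (intΩ Γ (fun x1 x2 => f x1 x2 ^ 2 + q1 f x1 x2 ^ 2 + q2 f x1 x2 ^ 2))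

/-- A classical solution of the Boussinesq system on Ω = [0,Γ]×[0,1] with
Rayleigh number Ra, Prandtl number Pr, slip length Ls ∈ (0,∞]
(Navier-slip with friction coefficient `(Ls⁻¹).toReal`; for Ls = ∞ this is free-slip). -/
structure Sol (Γ Ra Pr : ℝ) (Ls : ℝ≥0∞) where
  u1 : TField
  u2 : TField
  T : TField
  p : TField
  smooth_u1 : tsmooth u1
  smooth_u2 : tsmooth u2
  smooth_T : tsmooth T
  smooth_p : tsmooth p
  periodic_u1 : tperiodic Γ u1
  periodic_u2 : tperiodic Γ u2
  periodic_T : tperiodic Γ T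
  periodic_p : tperiodic Γ p
  momentum1 : ∀ t x1 x2, 0 ≤ t → x2 ∈ Icc (0:ℝ) 1 →
    Pr⁻¹ * (dt u1 t x1 x2 + u1 t x1 x2 * d1 u1 t x1 x2 + u2 t x1 x2 * d2 u1 t x1 x2)
      - (d1 (d1 u1) t x1 x2 + d2 (d2 u1) t x1 x2) + d1 p t x1 x2 = 0
  momentum2 : ∀ t x1 x2, 0 ≤ t → x2 ∈ Icc (0:ℝ) 1 →
    Pr⁻¹ * (dt u2 t x1 x2 + u1 t x1 x2 * d1 u2 t x1 x2 + u2 t x1 x2 * d2 u2 t x1 x2)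
      - (d1 (d1 u2) t x1 x2 + d2 (d2 u2) t x1 x2) + d2 p t x1 x2 = Ra * T t x1 x2
  incomp : ∀ t x1 x2, 0 ≤ t → x2 ∈ Icc (0:ℝ) 1 →
    d1 u1 t x1 x2 + d2 u2 t x1 x2 = 0
  heat : ∀ t x1 x2, 0 ≤ t → x2 ∈ Icc (0:ℝ) 1 →
    dt T t x1 x2 + u1 t x1 x2 * d1 T t x1 x2 + u2 t x1 x2 * d2 T t x1 x2
      - (d1 (d1 T) t x1 x2 + d2 (d2 T) t x1 x2) = 0
  T_bot : ∀ t x1, 0 ≤ t → T t x1 0 = 1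
  T_top : ∀ t x1, 0 ≤ t → T t x1 1 = 0
  u2_bot : ∀ t x1, 0 ≤ t → u2 t x1 0 = 0
  u2_top : ∀ t x1, 0 ≤ t → u2 t x1 1 = 0
  slip_top : ∀ t x1, 0 ≤ t → d2 u1 t x1 1 = -(Ls⁻¹).toReal * u1 t x1 1
  slip_bot : ∀ t x1, 0 ≤ t → d2 u1 t x1 0 = (Ls⁻¹).toReal * u1 t x1 0

variable {Γ Ra Pr : ℝ} {Ls : ℝ≥0∞}

/-- The Nusselt number Nu = ⟨∫₀¹ (u₂T − ∂₂T) dx₂⟩. -/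
def Nu (S : Sol Γ Ra Pr Ls) : ℝ :=
  ltavg Γ (fun t x1 => ∫ x2 in (0:ℝ)..1, (S.u2 t x1 x2 * S.T t x1 x2 - d2 S.T t x1 x2))

/-- The initial temperature satisfies 0 ≤ T₀ ≤ 1 on Ω. -/
def T0cond (S : Sol Γ Ra Pr Ls) : Prop :=
  ∀ x1 x2, x2 ∈ Icc (0:ℝ) 1 → S.T 0 x1 x2 ∈ Icc (0:ℝ) 1

/-- The vorticity ω = ∂₁u₂ − ∂₂u₁. -/
def vort (S : Sol Γ Ra Pr Ls) : TField :=
  fun t x1 x2 => d1 S.u2 t x1 x2 - d2 S.u1 t x1 x2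

/-- |∇u|² pointwise. -/
def gradSq (S : Sol Γ Ra Pr Ls) : TField := fun t x1 x2 =>
  d1 S.u1 t x1 x2 ^ 2 + d2 S.u1 t x1 x2 ^ 2 + d1 S.u2 t x1 x2 ^ 2 + d2 S.u2 t x1 x2 ^ 2

/-- |∇²u|² pointwise: sum of squares of all second spatial derivatives of u. -/
def hessSq (S : Sol Γ Ra Pr Ls) : TField := fun t x1 x2 =>
  d1 (d1 S.u1) t x1 x2 ^ 2 + d1 (d2 S.u1) t x1 x2 ^ 2 +
  d2 (d1 S.u1) t x1 x2 ^ 2 + d2 (d2 S.u1) t x1 x2 ^ 2 +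
  d1 (d1 S.u2) t x1 x2 ^ 2 + d1 (d2 S.u2) t x1 x2 ^ 2 +
  d2 (d1 S.u2) t x1 x2 ^ 2 + d2 (d2 S.u2) t x1 x2 ^ 2

/-- ‖u(t)‖_{L²}. -/
def uL2 (S : Sol Γ Ra Pr Ls) (t : ℝ) : ℝ :=
  Real.sqrt (intΩ Γ (fun x1 x2 => S.u1 t x1 x2 ^ 2 + S.u2 t x1 x2 ^ 2))

/-- ‖u₀‖_{W^{1,4}}. -/
def W14u0 (S : Sol Γ Ra Pr Ls) : ℝ :=
  (intΩ Γ (fun x1 x2 =>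
    (S.u1 0 x1 x2 ^ 2 + S.u2 0 x1 x2 ^ 2) ^ 2 + (gradSq S 0 x1 x2) ^ 2)) ^ ((1:ℝ)/4)

/-- ‖ω(t)‖_{L⁴}. -/
def omegaL4 (S : Sol Γ Ra Pr Ls) (t : ℝ) : ℝ :=
  (intΩ Γ (fun x1 x2 => vort S t x1 x2 ^ 4)) ^ ((1:ℝ)/4)


lemma one_le_top' : (1 : WithTop ℕ∞) ≤ ((⊤ : ℕ∞) : WithTop ℕ∞) := by exact_mod_cast le_top
lemma two_le_top' : (2 : WithTop ℕ∞) ≤ ((⊤ : ℕ∞) : WithTop ℕ∞) := by norm_cast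
lemma topadd : ((⊤ : ℕ∞) : WithTop ℕ∞) + 1 ≤ ((⊤ : ℕ∞) : WithTop ℕ∞) := by exact_mod_cast (le_top : ((⊤:ℕ∞)+1) ≤ ⊤)

lemma hasDerivAt_line1 (f : SField) (hf : ssmooth f) (x1 x2 : ℝ) :
    HasDerivAt (fun y => f y x2) (fderiv ℝ (fun q : ℝ × ℝ => f q.1 q.2) (x1, x2) (1, 0)) x1 := by
  have h1 : HasDerivAt (fun y : ℝ => (y, x2)) ((1:ℝ), (0:ℝ)) x1 := by
    simpa using (hasDerivAt_id x1).prodMk (hasDerivAt_const x1 x2)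
  have h2 := (hf.differentiable (by simp) (x1, x2)).hasFDerivAt
  exact h2.comp_hasDerivAt x1 h1

lemma hasDerivAt_line2 (f : SField) (hf : ssmooth f) (x1 x2 : ℝ) :
    HasDerivAt (fun y => f x1 y) (fderiv ℝ (fun q : ℝ × ℝ => f q.1 q.2) (x1, x2) (0, 1)) x2 := by
  have h1 : HasDerivAt (fun y : ℝ => (x1, y)) ((0:ℝ), (1:ℝ)) x2 := by
    simpa using (hasDerivAt_const x2 x1).prodMk (hasDerivAt_id x2)
  have h2 := (hf.differentiable (by simp) (x1, x2)).hasFDerivAt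
  exact h2.comp_hasDerivAt x2 h1

lemma q1_eq (f : SField) (hf : ssmooth f) (x1 x2 : ℝ) :
    q1 f x1 x2 = fderiv ℝ (fun q : ℝ × ℝ => f q.1 q.2) (x1, x2) (1, 0) :=
  (hasDerivAt_line1 f hf x1 x2).deriv

lemma q2_eq (f : SField) (hf : ssmooth f) (x1 x2 : ℝ) :
    q2 f x1 x2 = fderiv ℝ (fun q : ℝ × ℝ => f q.1 q.2) (x1, x2) (0, 1) :=
  (hasDerivAt_line2 f hf x1 x2).deriv

lemma ssmooth.q1 {f : SField} (hf : ssmooth f) : ssmooth (RB.q1 f) := by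
  have h : ContDiff ℝ (⊤ : ℕ∞)
      (fun p : ℝ × ℝ => fderiv ℝ (fun q : ℝ × ℝ => f q.1 q.2) p (1, 0)) :=
    (hf.fderiv_right topadd).clm_apply contDiff_const
  have he : (fun p : ℝ × ℝ => RB.q1 f p.1 p.2)
      = fun p : ℝ × ℝ => fderiv ℝ (fun q : ℝ × ℝ => f q.1 q.2) p (1, 0) :=
    funext fun p => q1_eq f hf p.1 p.2
  unfold ssmooth; rw [he]; exact h

lemma ssmooth.q2 {f : SField} (hf : ssmooth f) : ssmooth (RB.q2 f) := by
  have h : ContDiff ℝ (⊤ : ℕ∞)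
      (fun p : ℝ × ℝ => fderiv ℝ (fun q : ℝ × ℝ => f q.1 q.2) p (0, 1)) :=
    (hf.fderiv_right topadd).clm_apply contDiff_const
  have he : (fun p : ℝ × ℝ => RB.q2 f p.1 p.2)
      = fun p : ℝ × ℝ => fderiv ℝ (fun q : ℝ × ℝ => f q.1 q.2) p (0, 1) :=
    funext fun p => q2_eq f hf p.1 p.2
  unfold ssmooth; rw [he]; exact h

lemma clairaut {f : SField} (hf : ssmooth f) (x1 x2 : ℝ) :
    q1 (q2 f) x1 x2 = q2 (q1 f) x1 x2 := by
  set F : ℝ × ℝ → ℝ := fun q => f q.1 q.2 with hF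
  have hG : ContDiff ℝ (⊤ : ℕ∞) (fderiv ℝ F) := hf.fderiv_right topadd
  have hGd : DifferentiableAt ℝ (fderiv ℝ F) (x1, x2) :=
    (hG.differentiable (by simp)) (x1, x2)
  have key : ∀ v w : ℝ × ℝ,
      fderiv ℝ (fun p => fderiv ℝ F p v) (x1, x2) w = fderiv ℝ (fderiv ℝ F) (x1, x2) w v := by
    intro v w
    have h := hGd.hasFDerivAt.clm_apply (hasFDerivAt_const v (x1, x2))
    rw [h.fderiv]
    simp
  have hsymm : IsSymmSndFDerivAt ℝ F (x1, x2) :=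
    (hf.contDiffAt).isSymmSndFDerivAt
      (by rw [minSmoothness_of_isRCLikeNormedField]; exact two_le_top')
  have e1 : q1 (q2 f) x1 x2 = fderiv ℝ (fun p : ℝ × ℝ => fderiv ℝ F p (0, 1)) (x1, x2) (1, 0) := by
    have hfe : (fun q : ℝ × ℝ => q2 f q.1 q.2) = fun p : ℝ × ℝ => fderiv ℝ F p (0, 1) :=
      funext fun p => q2_eq f hf p.1 p.2
    rw [q1_eq (q2 f) hf.q2 x1 x2, hfe]
  have e2 : q2 (q1 f) x1 x2 = fderiv ℝ (fun p : ℝ × ℝ => fderiv ℝ F p (1, 0)) (x1, x2) (0, 1) := by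
    have hfe : (fun q : ℝ × ℝ => q1 f q.1 q.2) = fun p : ℝ × ℝ => fderiv ℝ F p (1, 0) :=
      funext fun p => q1_eq f hf p.1 p.2
    rw [q2_eq (q1 f) hf.q1 x1 x2, hfe]
  rw [e1, e2, key, key]
  exact hsymm (1, 0) (0, 1)

lemma ssmooth.cont {f : SField} (hf : ssmooth f) : Continuous (fun p : ℝ × ℝ => f p.1 p.2) :=
  hf.continuous

lemma ssmooth.mul {f g : SField} (hf : ssmooth f) (hg : ssmooth g) :
    ssmooth (fun a b => f a b * g a b) := ContDiff.mul hf hg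

lemma diffAt1 {f : SField} (hf : ssmooth f) (x1 x2 : ℝ) :
    DifferentiableAt ℝ (fun y => f y x2) x1 :=
  (hasDerivAt_line1 f hf x1 x2).differentiableAt

lemma diffAt2 {f : SField} (hf : ssmooth f) (x1 x2 : ℝ) :
    DifferentiableAt ℝ (fun y => f x1 y) x2 :=
  (hasDerivAt_line2 f hf x1 x2).differentiableAt

lemma q1_mul {f g : SField} (hf : ssmooth f) (hg : ssmooth g) (x1 x2 : ℝ) :
    q1 (fun a b => f a b * g a b) x1 x2
      = q1 f x1 x2 * g x1 x2 + f x1 x2 * q1 g x1 x2 := by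
  unfold q1
  exact deriv_mul (diffAt1 hf x1 x2) (diffAt1 hg x1 x2)

lemma q2_mul {f g : SField} (hf : ssmooth f) (hg : ssmooth g) (x1 x2 : ℝ) :
    q2 (fun a b => f a b * g a b) x1 x2
      = q2 f x1 x2 * g x1 x2 + f x1 x2 * q2 g x1 x2 := by
  unfold q2
  exact deriv_mul (diffAt2 hf x1 x2) (diffAt2 hg x1 x2)

lemma q1_sub {f g : SField} (hf : ssmooth f) (hg : ssmooth g) (x1 x2 : ℝ) :
    q1 (fun a b => f a b - g a b) x1 x2 = q1 f x1 x2 - q1 g x1 x2 := by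
  unfold q1
  exact deriv_sub (diffAt1 hf x1 x2) (diffAt1 hg x1 x2)

lemma q2_sub {f g : SField} (hf : ssmooth f) (hg : ssmooth g) (x1 x2 : ℝ) :
    q2 (fun a b => f a b - g a b) x1 x2 = q2 f x1 x2 - q2 g x1 x2 := by
  unfold q2
  exact deriv_sub (diffAt2 hf x1 x2) (diffAt2 hg x1 x2)

lemma speriodic.q1 {Γ : ℝ} {f : SField} (hp : speriodic Γ f) : speriodic Γ (RB.q1 f) := by
  intro x1 x2
  unfold RB.q1
  have h2 : deriv (fun y => f (y + Γ) x2) x1 = deriv (fun y => f y x2) (x1 + Γ) :=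
    deriv_comp_add_const (fun z => f z x2) Γ x1
  rw [← h2]
  congr 1
  exact funext fun y => hp y x2

lemma speriodic.q2 {Γ : ℝ} {f : SField} (hp : speriodic Γ f) : speriodic Γ (RB.q2 f) := by
  intro x1 x2
  unfold RB.q2
  have : (fun y => f (x1 + Γ) y) = fun y => f x1 y := funext fun y => hp x1 y
  rw [this]

/-- FTC over a horizontal line: integral of q1 of a periodic field vanishes. -/
lemma integral_q1_periodic {Γ : ℝ} (hΓ : 0 < Γ) {f : SField} (hf : ssmooth f)
    (hp : speriodic Γ f) (x2 : ℝ) :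
    ∫ x1 in Ioc (0:ℝ) Γ, q1 f x1 x2 = 0 := by
  rw [← intervalIntegral.integral_of_le hΓ.le]
  have hd : ∀ x ∈ uIcc (0:ℝ) Γ, DifferentiableAt ℝ (fun y => f y x2) x :=
    fun x _ => diffAt1 hf x x2
  have hc : Continuous (fun x1 => q1 f x1 x2) :=
    hf.q1.cont.comp (continuous_id.prodMk continuous_const)
  have := intervalIntegral.integral_deriv_eq_sub hd (hc.intervalIntegrable 0 Γ)
  unfold q1
  rw [this]
  have := hp 0 x2
  rw [zero_add] at this
  rw [this, sub_self]

/-- FTC over a vertical line. -/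
lemma integral_q2_line {f : SField} (hf : ssmooth f) (x1 : ℝ) :
    ∫ x2 in Ioc (0:ℝ) 1, q2 f x1 x2 = f x1 1 - f x1 0 := by
  rw [← intervalIntegral.integral_of_le (by norm_num : (0:ℝ) ≤ 1)]
  have hd : ∀ x ∈ uIcc (0:ℝ) 1, DifferentiableAt ℝ (fun y => f x1 y) x :=
    fun x _ => diffAt2 hf x1 x
  have hc : Continuous (fun x2 => q2 f x1 x2) :=
    hf.q2.cont.comp (continuous_const.prodMk continuous_id)
  exact intervalIntegral.integral_deriv_eq_sub hd (hc.intervalIntegrable 0 1)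


lemma integrableOn_box {Γ : ℝ} (g : SField) (hg : Continuous fun p : ℝ × ℝ => g p.1 p.2) :
    IntegrableOn (fun p : ℝ × ℝ => g p.1 p.2) (Ioc (0:ℝ) Γ ×ˢ Ioc (0:ℝ) 1) :=
  ((hg.continuousOn).integrableOn_compact (isCompact_Icc.prod isCompact_Icc)).mono_set
    (Set.prod_mono Ioc_subset_Icc_self Ioc_subset_Icc_self)

lemma measure_prod_eq {Γ : ℝ} :
    ((volume : Measure ℝ).restrict (Ioc (0:ℝ) Γ)).prod
      ((volume : Measure ℝ).restrict (Ioc (0:ℝ) 1))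
    = (volume : Measure (ℝ × ℝ)).restrict (Ioc (0:ℝ) Γ ×ˢ Ioc (0:ℝ) 1) := by
  rw [Measure.volume_eq_prod, Measure.prod_restrict]

lemma intΩ_eq_prod {Γ : ℝ} (g : SField) (hg : Continuous fun p : ℝ × ℝ => g p.1 p.2) :
    intΩ Γ g = ∫ p in Ioc (0:ℝ) Γ ×ˢ Ioc (0:ℝ) 1, g p.1 p.2 := by
  have h' : Integrable (fun p : ℝ × ℝ => g p.1 p.2)
      (((volume : Measure ℝ).restrict (Ioc (0:ℝ) Γ)).prod
        ((volume : Measure ℝ).restrict (Ioc (0:ℝ) 1))) := by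
    rw [measure_prod_eq]; exact integrableOn_box g hg
  have h2 := MeasureTheory.integral_prod (fun p : ℝ × ℝ => g p.1 p.2) h'
  rw [measure_prod_eq] at h2
  exact h2.symm

lemma intΩ_swap {Γ : ℝ} (g : SField) (hg : Continuous fun p : ℝ × ℝ => g p.1 p.2) :
    intΩ Γ g = ∫ x2 in Ioc (0:ℝ) 1, ∫ x1 in Ioc (0:ℝ) Γ, g x1 x2 := by
  have h' : Integrable (fun p : ℝ × ℝ => g p.1 p.2)
      (((volume : Measure ℝ).restrict (Ioc (0:ℝ) Γ)).prod
        ((volume : Measure ℝ).restrict (Ioc (0:ℝ) 1))) := by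
    rw [measure_prod_eq]; exact integrableOn_box g hg
  have h2 := MeasureTheory.integral_prod_symm (fun p : ℝ × ℝ => g p.1 p.2) h'
  rw [measure_prod_eq] at h2
  rw [intΩ_eq_prod g hg]
  exact h2

lemma intΩ_sub {Γ : ℝ} (g g' : SField) (hg : Continuous fun p : ℝ × ℝ => g p.1 p.2)
    (hg' : Continuous fun p : ℝ × ℝ => g' p.1 p.2) :
    intΩ Γ (fun a b => g a b - g' a b) = intΩ Γ g - intΩ Γ g' := by
  rw [intΩ_eq_prod g hg, intΩ_eq_prod g' hg', intΩ_eq_prod _ (hg.sub hg')]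
  exact MeasureTheory.integral_sub (integrableOn_box g hg) (integrableOn_box g' hg')

lemma intΩ_add {Γ : ℝ} (g g' : SField) (hg : Continuous fun p : ℝ × ℝ => g p.1 p.2)
    (hg' : Continuous fun p : ℝ × ℝ => g' p.1 p.2) :
    intΩ Γ (fun a b => g a b + g' a b) = intΩ Γ g + intΩ Γ g' := by
  rw [intΩ_eq_prod g hg, intΩ_eq_prod g' hg', intΩ_eq_prod _ (hg.add hg')]
  exact MeasureTheory.integral_add (integrableOn_box g hg) (integrableOn_box g' hg')

lemma intΩ_const_mul {Γ : ℝ} (c : ℝ) (g : SField) :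
    intΩ Γ (fun a b => c * g a b) = c * intΩ Γ g := by
  unfold intΩ
  rw [← MeasureTheory.integral_const_mul]
  exact integral_congr_ae (Filter.Eventually.of_forall fun x1 => by
    show (∫ x2 in Ioc (0:ℝ) 1, c * g x1 x2) = c * ∫ x2 in Ioc (0:ℝ) 1, g x1 x2
    exact MeasureTheory.integral_const_mul c _)

lemma intΩ_congr {Γ : ℝ} {g g' : SField} (h : ∀ a b, g a b = g' a b) :
    intΩ Γ g = intΩ Γ g' := by
  unfold intΩ
  congr 1
  funext a
  congr 1
  funext b
  exact h a b

lemma intΩ_congr_Ioo {Γ : ℝ} {g g' : SField} (h : ∀ a b, b ∈ Ioo (0:ℝ) 1 → g a b = g' a b) :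
    intΩ Γ g = intΩ Γ g' := by
  unfold intΩ
  refine integral_congr_ae (Filter.Eventually.of_forall fun x1 => ?_)
  refine setIntegral_congr_ae measurableSet_Ioc ?_
  have h1 : ∀ᵐ x : ℝ, x ≠ 1 := by
    refine compl_mem_ae_iff.mpr ?_
    exact measure_mono_null (fun x hx => hx) (measure_singleton (1:ℝ))
  filter_upwards [h1] with b hb hmem
  exact h x1 b ⟨hmem.1, lt_of_le_of_ne hmem.2 hb⟩

lemma ssmooth.sub' {f g : SField} (hf : ssmooth f) (hg : ssmooth g) :
    ssmooth (fun a b => f a b - g a b) := ContDiff.sub hf hg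

lemma contLine {f : SField} (hf : ssmooth f) (b : ℝ) : Continuous fun x1 => f x1 b :=
  hf.cont.comp (continuous_id.prodMk continuous_const)

/-- Key integration-by-parts identity for a single smooth periodic field. -/
lemma keyA {Γ : ℝ} (hΓ : 0 < Γ) (v : SField) (hv : ssmooth v) (hpv : speriodic Γ v) :
    intΩ Γ (fun a b => q1 (q1 v) a b * q2 (q2 v) a b - q1 (q2 v) a b ^ 2)
      = ∫ x1 in Ioc (0:ℝ) Γ,
          (q2 v x1 1 * q1 (q1 v) x1 1 - q2 v x1 0 * q1 (q1 v) x1 0) := by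
  set G : SField := fun a b => q2 v a b * q1 (q2 v) a b with hGdef
  set H : SField := fun a b => q2 v a b * q1 (q1 v) a b with hHdef
  have hG : ssmooth G := hv.q2.mul hv.q2.q1
  have hH : ssmooth H := hv.q2.mul hv.q1.q1
  have mix : ∀ a b, q1 (q1 (q2 v)) a b = q2 (q1 (q1 v)) a b := by
    have hc : RB.q1 (RB.q2 v) = RB.q2 (RB.q1 v) :=
      funext fun a => funext fun b => clairaut hv a b
    intro a b
    rw [hc]
    exact clairaut hv.q1 a b
  have pointwise : ∀ a b, q1 (q1 v) a b * q2 (q2 v) a b - q1 (q2 v) a b ^ 2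
      = q2 H a b - q1 G a b := by
    intro a b
    have h1 : q2 H a b = q2 (q2 v) a b * q1 (q1 v) a b + q2 v a b * q2 (q1 (q1 v)) a b :=
      q2_mul hv.q2 hv.q1.q1 a b
    have h2 : q1 G a b = q1 (q2 v) a b * q1 (q2 v) a b + q2 v a b * q1 (q1 (q2 v)) a b :=
      q1_mul hv.q2 hv.q2.q1 a b
    rw [h1, h2, mix a b]
    ring
  rw [intΩ_congr pointwise, intΩ_sub _ _ hH.q2.cont hG.q1.cont]
  have e1 : intΩ Γ (RB.q2 H) = ∫ x1 in Ioc (0:ℝ) Γ, (H x1 1 - H x1 0) := by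
    unfold intΩ
    exact integral_congr_ae (Filter.Eventually.of_forall fun x1 => integral_q2_line hH x1)
  have e2 : intΩ Γ (RB.q1 G) = 0 := by
    rw [intΩ_swap _ hG.q1.cont]
    have hpG : speriodic Γ G := by
      intro a b
      show q2 v (a + Γ) b * q1 (q2 v) (a + Γ) b = q2 v a b * q1 (q2 v) a b
      rw [hpv.q2 a b, (hpv.q2).q1 a b]
    have : ∀ x2 : ℝ, (∫ x1 in Ioc (0:ℝ) Γ, q1 G x1 x2) = 0 :=
      fun x2 => integral_q1_periodic hΓ hG hpG x2
    simp [this]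
  rw [e1, e2, sub_zero]

/-- Hessian–vorticity estimate ‖∇²u‖_{L²} ≤ ‖∇ω‖_{L²}. -/
theorem hessian_vorticity_estimate (Γ : ℝ) (hΓ : 0 < Γ) (Ls : ℝ≥0∞) (hLs : Ls ≠ 0)
    (u1 u2 : SField) (hu1 : ssmooth u1) (hu2 : ssmooth u2)
    (hpu1 : speriodic Γ u1) (hpu2 : speriodic Γ u2)
    (hinc : ∀ x1 x2, x2 ∈ Icc (0:ℝ) 1 → q1 u1 x1 x2 + q2 u2 x1 x2 = 0)
    (hb0 : ∀ x1, u2 x1 0 = 0) (hb1 : ∀ x1, u2 x1 1 = 0)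
    (hs1 : ∀ x1, q2 u1 x1 1 = -(Ls⁻¹).toReal * u1 x1 1)
    (hs0 : ∀ x1, q2 u1 x1 0 = (Ls⁻¹).toReal * u1 x1 0) :
    Real.sqrt (intΩ Γ (fun x1 x2 =>
      q1 (q1 u1) x1 x2 ^ 2 + q1 (q2 u1) x1 x2 ^ 2 +
      q2 (q1 u1) x1 x2 ^ 2 + q2 (q2 u1) x1 x2 ^ 2 +
      q1 (q1 u2) x1 x2 ^ 2 + q1 (q2 u2) x1 x2 ^ 2 +
      q2 (q1 u2) x1 x2 ^ 2 + q2 (q2 u2) x1 x2 ^ 2)) ≤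
    Real.sqrt (intΩ Γ (fun x1 x2 =>
      q1 (fun y1 y2 => q1 u2 y1 y2 - q2 u1 y1 y2) x1 x2 ^ 2 +
      q2 (fun y1 y2 => q1 u2 y1 y2 - q2 u1 y1 y2) x1 x2 ^ 2)) := by
  set κ : ℝ := (Ls⁻¹).toReal with hκ
  have hκ0 : 0 ≤ κ := ENNReal.toReal_nonneg
  set W : SField := fun y1 y2 => q1 u2 y1 y2 - q2 u1 y1 y2 with hWdef
  have hW : ssmooth W := hu2.q1.sub' hu1.q2
  -- continuity of the two integrands
  have chess : Continuous (fun p : ℝ × ℝ =>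
      q1 (q1 u1) p.1 p.2 ^ 2 + q1 (q2 u1) p.1 p.2 ^ 2 +
      q2 (q1 u1) p.1 p.2 ^ 2 + q2 (q2 u1) p.1 p.2 ^ 2 +
      q1 (q1 u2) p.1 p.2 ^ 2 + q1 (q2 u2) p.1 p.2 ^ 2 +
      q2 (q1 u2) p.1 p.2 ^ 2 + q2 (q2 u2) p.1 p.2 ^ 2) := by
    exact (((((((hu1.q1.q1.cont.pow 2).add (hu1.q2.q1.cont.pow 2)).add
      (hu1.q1.q2.cont.pow 2)).add (hu1.q2.q2.cont.pow 2)).add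
      (hu2.q1.q1.cont.pow 2)).add (hu2.q2.q1.cont.pow 2)).add
      (hu2.q1.q2.cont.pow 2)).add (hu2.q2.q2.cont.pow 2)
  have cgrad : Continuous (fun p : ℝ × ℝ => q1 W p.1 p.2 ^ 2 + q2 W p.1 p.2 ^ 2) :=
    (hW.q1.cont.pow 2).add (hW.q2.cont.pow 2)
  -- incompressibility consequences
  have hB2 : ∀ a b, b ∈ Icc (0:ℝ) 1 → q1 (q2 u2) a b = -q1 (q1 u1) a b := by
    intro a b hb
    have hfe : (fun y => q2 u2 y b) = fun y => -(q1 u1 y b) := by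
      funext y
      have := hinc y b hb
      linarith
    show deriv (fun y => q2 u2 y b) a = -deriv (fun y => q1 u1 y b) a
    rw [hfe]
    exact deriv.neg
  have hB1 : ∀ a b, b ∈ Ioo (0:ℝ) 1 → q2 (q1 u1) a b = -q2 (q2 u2) a b := by
    intro a b hb
    have hev : (fun y => q1 u1 a y) =ᶠ[nhds b] fun y => -(q2 u2 a y) := by
      filter_upwards [Icc_mem_nhds hb.1 hb.2] with y hy
      have := hinc a y hy
      linarith
    show deriv (fun y => q1 u1 a y) b = -deriv (fun y => q2 u2 a y) b
    rw [hev.deriv_eq]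
    exact deriv.neg
  -- the two boundary flux quantities
  have hJ : ∀ b : ℝ, 0 ≤ ∫ x1 in Ioc (0:ℝ) Γ, q1 u1 x1 b ^ 2 :=
    fun b => setIntegral_nonneg measurableSet_Ioc (fun x _ => sq_nonneg _)
  -- key identities from keyA
  have key1 := keyA hΓ u1 hu1 hpu1
  have key2 := keyA hΓ u2 hu2 hpu2
  -- boundary term for u2 vanishes
  have hq1u2b : ∀ (b : ℝ), (∀ x1, u2 x1 b = 0) → ∀ x1, q1 (q1 u2) x1 b = 0 := by
    intro b hb x1
    have h0 : (fun y => u2 y b) = fun _ => (0:ℝ) := funext fun y => hb y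
    have h1 : ∀ y, q1 u2 y b = 0 := by
      intro y
      show deriv (fun z => u2 z b) y = 0
      rw [h0]
      exact deriv_const y 0
    show deriv (fun y => q1 u2 y b) x1 = 0
    have h2 : (fun y => q1 u2 y b) = fun _ => (0:ℝ) := funext h1
    rw [h2]
    exact deriv_const x1 0
  have S2zero : (∫ x1 in Ioc (0:ℝ) Γ,
      (q2 u2 x1 1 * q1 (q1 u2) x1 1 - q2 u2 x1 0 * q1 (q1 u2) x1 0)) = 0 := by
    have : ∀ x1 : ℝ, q2 u2 x1 1 * q1 (q1 u2) x1 1 - q2 u2 x1 0 * q1 (q1 u2) x1 0 = 0 := by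
      intro x1
      rw [hq1u2b 1 hb1 x1, hq1u2b 0 hb0 x1]
      ring
    simp [this]
  -- boundary term for u1
  have I_eq : ∀ b : ℝ, (∫ x1 in Ioc (0:ℝ) Γ, u1 x1 b * q1 (q1 u1) x1 b)
      = -∫ x1 in Ioc (0:ℝ) Γ, q1 u1 x1 b ^ 2 := by
    intro b
    set K : SField := fun a b' => u1 a b' * q1 u1 a b' with hKdef
    have hK : ssmooth K := hu1.mul hu1.q1
    have hpK : speriodic Γ K := by
      intro a b'
      show u1 (a + Γ) b' * q1 u1 (a + Γ) b' = u1 a b' * q1 u1 a b'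
      rw [hpu1 a b', hpu1.q1 a b']
    have hpt : ∀ x1 : ℝ, u1 x1 b * q1 (q1 u1) x1 b = q1 K x1 b - q1 u1 x1 b ^ 2 := by
      intro x1
      have := q1_mul hu1 hu1.q1 x1 b
      rw [this]
      ring
    rw [setIntegral_congr_ae measurableSet_Ioc
      (Filter.Eventually.of_forall fun x1 _ => hpt x1)]
    rw [MeasureTheory.integral_sub (g := fun x1 => q1 u1 x1 b ^ 2)
      ((contLine hK.q1 b).integrableOn_Ioc)
      (show IntegrableOn (fun x1 => q1 u1 x1 b ^ 2) (Ioc 0 Γ) volume from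
        ((contLine hu1.q1 b).pow 2).integrableOn_Ioc)]
    rw [integral_q1_periodic hΓ hK hpK b]
    ring
  have S1eq : (∫ x1 in Ioc (0:ℝ) Γ,
      (q2 u1 x1 1 * q1 (q1 u1) x1 1 - q2 u1 x1 0 * q1 (q1 u1) x1 0))
      = κ * ((∫ x1 in Ioc (0:ℝ) Γ, q1 u1 x1 1 ^ 2) + ∫ x1 in Ioc (0:ℝ) Γ, q1 u1 x1 0 ^ 2) := by
    have hpt : ∀ x1 : ℝ, q2 u1 x1 1 * q1 (q1 u1) x1 1 - q2 u1 x1 0 * q1 (q1 u1) x1 0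
        = (-κ) * (u1 x1 1 * q1 (q1 u1) x1 1 + u1 x1 0 * q1 (q1 u1) x1 0) := by
      intro x1
      rw [hs1 x1, hs0 x1]
      ring
    rw [setIntegral_congr_ae measurableSet_Ioc
      (Filter.Eventually.of_forall fun x1 _ => hpt x1)]
    rw [MeasureTheory.integral_const_mul]
    rw [MeasureTheory.integral_add
      (show IntegrableOn (fun x1 => u1 x1 1 * q1 (q1 u1) x1 1) (Ioc 0 Γ) volume from
        ((contLine hu1 1).mul (contLine hu1.q1.q1 1)).integrableOn_Ioc)
      (show IntegrableOn (fun x1 => u1 x1 0 * q1 (q1 u1) x1 0) (Ioc 0 Γ) volume from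
        ((contLine hu1 0).mul (contLine hu1.q1.q1 0)).integrableOn_Ioc)]
    rw [I_eq 1, I_eq 0]
    ring
  -- pointwise identity in the interior
  have pointwise : ∀ a b, b ∈ Ioo (0:ℝ) 1 →
      (q1 W a b ^ 2 + q2 W a b ^ 2) -
      (q1 (q1 u1) a b ^ 2 + q1 (q2 u1) a b ^ 2 +
       q2 (q1 u1) a b ^ 2 + q2 (q2 u1) a b ^ 2 +
       q1 (q1 u2) a b ^ 2 + q1 (q2 u2) a b ^ 2 +
       q2 (q1 u2) a b ^ 2 + q2 (q2 u2) a b ^ 2)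
      = 2 * (q1 (q1 u1) a b * q2 (q2 u1) a b - q1 (q2 u1) a b ^ 2)
        + 2 * (q1 (q1 u2) a b * q2 (q2 u2) a b - q1 (q2 u2) a b ^ 2) := by
    intro a b hb
    have e3 : q2 (q1 u1) a b = q1 (q2 u1) a b := (clairaut hu1 a b).symm
    have e4 : q2 (q1 u2) a b = q1 (q2 u2) a b := (clairaut hu2 a b).symm
    have e5 : q1 (q2 u2) a b = -q1 (q1 u1) a b := hB2 a b (Ioo_subset_Icc_self hb)
    have e6 : q1 (q2 u1) a b = -q2 (q2 u2) a b := by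
      rw [clairaut hu1 a b]
      exact hB1 a b hb
    have e1 : q1 W a b = q1 (q1 u2) a b + q2 (q2 u2) a b := by
      rw [hWdef, q1_sub hu2.q1 hu1.q2 a b, e6]
      ring
    have e2 : q2 W a b = -(q1 (q1 u1) a b + q2 (q2 u1) a b) := by
      rw [hWdef, q2_sub hu2.q1 hu1.q2 a b, e4, e5]
      ring
    rw [e1, e2, e3, e4, e5, e6]
    ring
  -- assemble
  have cP1 : Continuous (fun p : ℝ × ℝ =>
      2 * (q1 (q1 u1) p.1 p.2 * q2 (q2 u1) p.1 p.2 - q1 (q2 u1) p.1 p.2 ^ 2)) :=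
    continuous_const.mul ((hu1.q1.q1.cont.mul hu1.q2.q2.cont).sub (hu1.q2.q1.cont.pow 2))
  have cP2 : Continuous (fun p : ℝ × ℝ =>
      2 * (q1 (q1 u2) p.1 p.2 * q2 (q2 u2) p.1 p.2 - q1 (q2 u2) p.1 p.2 ^ 2)) :=
    continuous_const.mul ((hu2.q1.q1.cont.mul hu2.q2.q2.cont).sub (hu2.q2.q1.cont.pow 2))
  have main : intΩ Γ (fun x1 x2 => q1 W x1 x2 ^ 2 + q2 W x1 x2 ^ 2)
      - intΩ Γ (fun x1 x2 =>
        q1 (q1 u1) x1 x2 ^ 2 + q1 (q2 u1) x1 x2 ^ 2 +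
        q2 (q1 u1) x1 x2 ^ 2 + q2 (q2 u1) x1 x2 ^ 2 +
        q1 (q1 u2) x1 x2 ^ 2 + q1 (q2 u2) x1 x2 ^ 2 +
        q2 (q1 u2) x1 x2 ^ 2 + q2 (q2 u2) x1 x2 ^ 2)
      = 2 * (κ * ((∫ x1 in Ioc (0:ℝ) Γ, q1 u1 x1 1 ^ 2)
          + ∫ x1 in Ioc (0:ℝ) Γ, q1 u1 x1 0 ^ 2)) + 2 * 0 := by
    rw [← intΩ_sub _ _ cgrad chess]
    rw [intΩ_congr_Ioo pointwise]
    rw [intΩ_add _ _ cP1 cP2]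
    rw [intΩ_const_mul 2 _, intΩ_const_mul 2 _, key1, key2, S1eq, S2zero]
  have hle : intΩ Γ (fun x1 x2 =>
        q1 (q1 u1) x1 x2 ^ 2 + q1 (q2 u1) x1 x2 ^ 2 +
        q2 (q1 u1) x1 x2 ^ 2 + q2 (q2 u1) x1 x2 ^ 2 +
        q1 (q1 u2) x1 x2 ^ 2 + q1 (q2 u2) x1 x2 ^ 2 +
        q2 (q1 u2) x1 x2 ^ 2 + q2 (q2 u2) x1 x2 ^ 2)
      ≤ intΩ Γ (fun x1 x2 => q1 W x1 x2 ^ 2 + q2 W x1 x2 ^ 2) := by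
    have h1 := hJ 1
    have h0 := hJ 0
    nlinarith [main, mul_nonneg hκ0 (add_nonneg h1 h0)]
  exact Real.sqrt_le_sqrt hle


end RB
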